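/- The set RZ_3, with the subspace topology from ℝ^3, is homeomorphic to the 2-sphere, i.e., to the unit sphere {x ∈ EuclideanSpace ℝ (Fin 3) : ‖x‖ = 1}. -/

import Mathlib

/-- The real moment-angle complex of the boundary of an `m`-gon:
the union over `i : Fin m` of the faces where coordinates `i, i+1` (indices mod `m`)
range in `[-1, 1]` and all other coordinates are `±1`. -/
def RZ (m : ℕ) : Set (Fin m → ℝ) :=
  ⋃ i : Fin m,
    letI : NeZero m := ⟨i.pos.ne'⟩
    {x | (∀ j, -1 ≤ x j ∧ x j ≤ 1) ∧
      ∀ j, j ≠ i → j ≠ i + 1 → (x j = -1 ∨ x j = 1)}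

open Metric

/-- `RZ 3` is the unit sphere of the sup norm on `Fin 3 → ℝ` (the boundary of the cube). -/
lemma RZ_three_eq : RZ 3 = sphere (0 : Fin 3 → ℝ) 1 := by
  ext x
  simp only [RZ, Set.mem_iUnion, Set.mem_setOf_eq, mem_sphere_zero_iff_norm]
  constructor
  · rintro ⟨i, h1, h2⟩
    have hle : ‖x‖ ≤ 1 := by
      rw [pi_norm_le_iff_of_nonneg zero_le_one]
      intro j
      rw [Real.norm_eq_abs, abs_le]
      exact h1 j
    have h3 : x (i + 2) = -1 ∨ x (i + 2) = 1 := by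
      apply h2 <;> · fin_cases i <;> decide
    have hge : (1:ℝ) ≤ ‖x‖ := by
      have := norm_le_pi_norm x (i + 2)
      rw [Real.norm_eq_abs] at this
      rcases h3 with h | h <;> rw [h] at this <;> simpa using this
    linarith
  · intro hx
    have h1 : ∀ j, -1 ≤ x j ∧ x j ≤ 1 := by
      intro j
      have := norm_le_pi_norm x j
      rw [hx, Real.norm_eq_abs, abs_le] at this
      exact this
    have h2 : ∃ k, x k = -1 ∨ x k = 1 := by
      by_contra h
      push_neg at h
      have : ‖x‖ < 1 := by
        rw [pi_norm_lt_iff one_pos]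
        intro j
        rw [Real.norm_eq_abs]
        rcases (h j) with ⟨hn, hp⟩
        rcases h1 j with ⟨ha, hb⟩
        rw [abs_lt]
        constructor <;> [exact lt_of_le_of_ne ha (Ne.symm hn); exact lt_of_le_of_ne hb hp]
      rw [hx] at this; exact lt_irrefl 1 this
    obtain ⟨k, hk⟩ := h2
    refine ⟨k + 1, h1, fun j hj1 hj2 => ?_⟩
    have : j = k := by omega
    rwa [this]

noncomputable def e := EuclideanSpace.equiv (Fin 3) ℝ

/-- Radial rescaling is a homeomorphism from the sup-norm unit sphere to the Euclidean
unit sphere. -/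
noncomputable def sphereHomeo :
    (sphere (0 : Fin 3 → ℝ) 1) ≃ₜ {x : EuclideanSpace ℝ (Fin 3) | ‖x‖ = 1} where
  toFun x := ⟨‖e.symm x.1‖⁻¹ • e.symm x.1, by
    have hx : ‖x.1‖ = 1 := mem_sphere_zero_iff_norm.mp x.2
    have hne : e.symm x.1 ≠ 0 := by
      simp only [ne_eq, EmbeddingLike.map_eq_zero_iff]
      exact fun h => by simp [h] at hx
    have hnorm : ‖e.symm x.1‖ ≠ 0 := norm_ne_zero_iff.mpr hne
    simp [norm_smul, abs_of_pos (inv_pos.mpr (norm_pos_iff.mpr hne)), inv_mul_cancel₀ hnorm]⟩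
  invFun y := ⟨‖e y.1‖⁻¹ • e y.1, by
    have hy : ‖y.1‖ = 1 := y.2
    have hne : e y.1 ≠ 0 := by
      simp only [ne_eq, EmbeddingLike.map_eq_zero_iff]
      exact fun h => by simp [h] at hy
    have hnorm : ‖e y.1‖ ≠ 0 := norm_ne_zero_iff.mpr hne
    rw [mem_sphere_zero_iff_norm]
    simp [norm_smul, abs_of_pos (inv_pos.mpr (norm_pos_iff.mpr hne)), inv_mul_cancel₀ hnorm]⟩
  left_inv x := by
    ext1
    have hx : ‖x.1‖ = 1 := mem_sphere_zero_iff_norm.mp x.2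
    have hne : e.symm x.1 ≠ 0 := by
      simp only [ne_eq, EmbeddingLike.map_eq_zero_iff]
      exact fun h => by simp [h] at hx
    set c := ‖e.symm x.1‖ with hc
    have hcpos : 0 < c := norm_pos_iff.mpr hne
    have key : e (c⁻¹ • e.symm x.1) = c⁻¹ • x.1 := by
      rw [map_smul, ContinuousLinearEquiv.apply_symm_apply]
    simp only [← hc, key, norm_smul, Real.norm_eq_abs, abs_of_pos (inv_pos.mpr hcpos), hx, mul_one,
      inv_inv, smul_smul]
    rw [mul_inv_cancel₀ hcpos.ne', one_smul]
  right_inv y := by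
    ext1
    have hy : ‖y.1‖ = 1 := y.2
    have hne : e y.1 ≠ 0 := by
      simp only [ne_eq, EmbeddingLike.map_eq_zero_iff]
      exact fun h => by simp [h] at hy
    set c := ‖e y.1‖ with hc
    have hcpos : 0 < c := norm_pos_iff.mpr hne
    have key : e.symm (c⁻¹ • e y.1) = c⁻¹ • y.1 := by
      rw [map_smul, ContinuousLinearEquiv.symm_apply_apply]
    simp only [← hc, key, norm_smul, Real.norm_eq_abs, abs_of_pos (inv_pos.mpr hcpos), hy, mul_one,
      inv_inv, smul_smul]
    rw [mul_inv_cancel₀ hcpos.ne', one_smul]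
  continuous_toFun := by
    apply Continuous.subtype_mk
    have hc : Continuous fun x : sphere (0 : Fin 3 → ℝ) 1 => e.symm x.1 :=
      e.symm.continuous.comp continuous_subtype_val
    exact (hc.norm.inv₀ fun x => norm_ne_zero_iff.mpr (by
      have hx : ‖x.1‖ = 1 := mem_sphere_zero_iff_norm.mp x.2
      simp only [ne_eq, EmbeddingLike.map_eq_zero_iff]
      exact fun h => by simp [h] at hx)).smul hc
  continuous_invFun := by
    apply Continuous.subtype_mk
    have hc : Continuous fun y : {x : EuclideanSpace ℝ (Fin 3) | ‖x‖ = 1} => e y.1 :=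
      e.continuous.comp continuous_subtype_val
    exact (hc.norm.inv₀ fun y => norm_ne_zero_iff.mpr (by
      have hy : ‖y.1‖ = 1 := y.2
      simp only [ne_eq, EmbeddingLike.map_eq_zero_iff]
      exact fun h => by simp [h] at hy)).smul hc

/-- `RZ 3` is homeomorphic to the 2-sphere. -/
theorem RZ_three_homeomorph_sphere :
    Nonempty ((RZ 3) ≃ₜ {x : EuclideanSpace ℝ (Fin 3) | ‖x‖ = 1}) := by
  exact ⟨(Homeomorph.setCongr RZ_three_eq).trans sphereHomeo⟩
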